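/- Let G be a group, S ⊆ G a symmetric, conjugation-closed generating set not containing the identity, and ‖·‖_S the associated word norm. Let Φ: G → ℝ be a relative quasimorphism with respect to ‖·‖_S with constant C. Assume that for every g ∈ G the limit Φ̄(g) = lim_{n→∞} Φ(gⁿ)/n exists, and that Φ̄(s) = 0 for every s ∈ S. Then |Φ̄(f)| ≤ 3·C·‖f‖_S for every f ∈ G. -/

import Mathlib

/-- The word norm associated with a generating set `S`: the least `n` such that `g`
is a product of `n` elements of `S` (so the identity has word norm `0`). -/
noncomputable def wordNorm {G : Type*} [Group G] (S : Set G) (g : G) : ℕ :=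
  sInf {n : ℕ | ∃ l : List G, l.length = n ∧ (∀ x ∈ l, x ∈ S) ∧ l.prod = g}

/-- Let `S` be a symmetric, conjugation-closed generating set of `G`
not containing the identity, and let `Φ` be a relative quasimorphism with respect to
the word norm `‖·‖_S` with constant `C`. If for every `g` the limit
`Φ̄(g) = lim_{n→∞} Φ(gⁿ)/n` exists and `Φ̄(s) = 0` for every `s ∈ S`, then
`|Φ̄(f)| ≤ 3·C·‖f‖_S` for every `f ∈ G`. -/
theorem stabilized_relative_quasimorphism_lipschitz
    {G : Type*} [Group G] (S : Set G)
    (hgen : Subgroup.closure S = ⊤)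
    (hone : (1 : G) ∉ S)
    (hsymm : ∀ s ∈ S, s⁻¹ ∈ S)
    (hconjS : ∀ s ∈ S, ∀ g : G, g * s * g⁻¹ ∈ S)
    (Φ : G → ℝ) (C : ℝ) (hC : 0 ≤ C)
    (hrel : ∀ g h : G, |Φ (g * h) - Φ g - Φ h| ≤
      C * min (wordNorm S g : ℝ) (wordNorm S h : ℝ))
    (Φbar : G → ℝ)
    (hlim : ∀ g : G,
      Filter.Tendsto (fun n : ℕ => Φ (g ^ n) / n) Filter.atTop (nhds (Φbar g)))
    (hvanish : ∀ s ∈ S, Φbar s = 0) :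
    ∀ f : G, |Φbar f| ≤ 3 * C * (wordNorm S f : ℝ) := by
  -- word norm of an element of S is at most 1
  have hnorm1 : ∀ s ∈ S, (wordNorm S s : ℝ) ≤ 1 := by
    intro s hs
    have h1 : wordNorm S s ≤ 1 :=
      Nat.sInf_le ⟨[s], rfl, by simpa using hs, by simp⟩
    exact_mod_cast h1
  -- quasimorphism defect is at most C when one factor lies in S
  have hstep : ∀ (x : G), ∀ s ∈ S, |Φ (s * x) - Φ s - Φ x| ≤ C := by
    intro x s hs
    refine (hrel s x).trans ?_
    have hm : min (wordNorm S s : ℝ) (wordNorm S x : ℝ) ≤ 1 :=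
      le_trans (min_le_left _ _) (hnorm1 s hs)
    calc C * min (wordNorm S s : ℝ) (wordNorm S x : ℝ) ≤ C * 1 :=
          mul_le_mul_of_nonneg_left hm hC
      _ = C := mul_one C
  -- |Φ s| ≤ C for s ∈ S
  have hΦS : ∀ s ∈ S, |Φ s| ≤ C := by
    intro s hs
    have hpow : ∀ m : ℕ, |Φ (s ^ (m + 1)) - (m + 1 : ℝ) * Φ s| ≤ (m : ℝ) * C := by
      intro m
      induction m with
      | zero => simp
      | succ m ih =>
        have h1 : |Φ (s * s ^ (m + 1)) - Φ s - Φ (s ^ (m + 1))| ≤ C := hstep _ s hs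
        have h2 : s ^ (m + 2) = s * s ^ (m + 1) := by
          rw [pow_succ']
        rw [h2]
        have e1 := abs_le.mp h1
        have e2 := abs_le.mp ih
        rw [abs_le]
        push_cast at e2 ⊢
        constructor <;> nlinarith [hC]
    have htend : Filter.Tendsto (fun m : ℕ => |Φ (s ^ (m + 1)) / (m + 1) - Φ s|)
        Filter.atTop (nhds (|0 - Φ s|)) := by
      have h0 : Filter.Tendsto (fun n : ℕ => Φ (s ^ n) / n) Filter.atTop (nhds 0) := by
        simpa [hvanish s hs] using hlim s
      have h1 : Filter.Tendsto (fun m : ℕ => Φ (s ^ (m + 1)) / (m + 1 : ℕ))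
          Filter.atTop (nhds 0) := h0.comp (Filter.tendsto_add_atTop_nat 1)
      have h1' : Filter.Tendsto (fun m : ℕ => Φ (s ^ (m + 1)) / ((m : ℝ) + 1))
          Filter.atTop (nhds 0) := by
        convert h1 using 2 with m
        push_cast
        ring
      exact ((h1'.sub tendsto_const_nhds).abs)
    have hb : ∀ m : ℕ, |Φ (s ^ (m + 1)) / ((m : ℝ) + 1) - Φ s| ≤ C := by
      intro m
      have hm1 : (0 : ℝ) < (m : ℝ) + 1 := by positivity
      have heq : Φ (s ^ (m + 1)) / ((m : ℝ) + 1) - Φ s =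
          (Φ (s ^ (m + 1)) - ((m : ℝ) + 1) * Φ s) / ((m : ℝ) + 1) := by
        field_simp
      rw [heq, abs_div, abs_of_pos hm1, div_le_iff₀ hm1]
      calc |Φ (s ^ (m + 1)) - ((m : ℝ) + 1) * Φ s| ≤ (m : ℝ) * C := hpow m
        _ ≤ C * ((m : ℝ) + 1) := by nlinarith [hC, Nat.cast_nonneg (α := ℝ) m]
    have := le_of_tendsto htend (Filter.Eventually.of_forall hb)
    simpa using this
  -- key telescoping estimate: products of elements of S move Φ by at most 2C each
  have hE : ∀ L : List G, (∀ x ∈ L, x ∈ S) → ∀ h : G,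
      |Φ (L.prod * h) - Φ h| ≤ 2 * C * L.length := by
    intro L
    induction L with
    | nil => intro _ h; simp
    | cons c L ih =>
      intro hmem h
      have hc : c ∈ S := hmem c (by simp)
      have ih' := ih (fun x hx => hmem x (by simp [hx])) h
      have h1 : |Φ (c * (L.prod * h)) - Φ c - Φ (L.prod * h)| ≤ C := hstep _ c hc
      have h2 : |Φ c| ≤ C := hΦS c hc
      have he : (c :: L).prod * h = c * (L.prod * h) := by
        simp [mul_assoc]
      rw [he]
      have e1 := abs_le.mp h1
      have e2 := abs_le.mp h2
      have e3 := abs_le.mp ih'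
      rw [abs_le]
      simp only [List.length_cons]
      push_cast
      constructor <;> linarith
  -- the conjugation identity
  have hid : ∀ (s g : G) (n : ℕ), (s * g) ^ n =
      ((List.range n).map (fun i => g ^ i * s * (g ^ i)⁻¹)).prod * g ^ n := by
    intro s g n
    induction n with
    | zero => simp
    | succ n ih =>
      rw [List.range_succ, List.map_append, List.prod_append, pow_succ (s * g), ih]
      simp only [List.map_cons, List.map_nil, List.prod_cons, List.prod_nil]
      rw [pow_succ g]
      group
  -- key step: left multiplication by an element of S moves Φbar by at most 2C
  have hD : ∀ (g : G), ∀ s ∈ S, |Φbar (s * g) - Φbar g| ≤ 2 * C := by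
    intro g s hs
    have hbound : ∀ n : ℕ, |Φ ((s * g) ^ n) - Φ (g ^ n)| ≤ 2 * C * n := by
      intro n
      have hmem : ∀ x ∈ (List.range n).map (fun i => g ^ i * s * (g ^ i)⁻¹), x ∈ S := by
        intro x hx
        simp only [List.mem_map, List.mem_range] at hx
        obtain ⟨i, _, rfl⟩ := hx
        exact hconjS s hs (g ^ i)
      have := hE _ hmem (g ^ n)
      rw [← hid s g n] at this
      simpa using this
    have htend : Filter.Tendsto
        (fun n : ℕ => |Φ ((s * g) ^ n) / n - Φ (g ^ n) / n|)
        Filter.atTop (nhds (|Φbar (s * g) - Φbar g|)) :=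
      ((hlim (s * g)).sub (hlim g)).abs
    refine le_of_tendsto htend ?_
    rw [Filter.eventually_atTop]
    refine ⟨1, fun n hn => ?_⟩
    have hn0 : (0 : ℝ) < (n : ℝ) := by exact_mod_cast hn
    rw [div_sub_div_same, abs_div, abs_of_pos hn0, div_le_iff₀ hn0]
    calc |Φ ((s * g) ^ n) - Φ (g ^ n)| ≤ 2 * C * n := hbound n
      _ = 2 * C * n := rfl
  -- Φbar 1 = 0
  have hbar1 : Φbar 1 = 0 := by
    have h1 : Filter.Tendsto (fun n : ℕ => Φ ((1 : G) ^ n) / n) Filter.atTop (nhds 0) := by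
      simpa using tendsto_const_div_atTop_nhds_zero_nat (Φ 1)
    exact tendsto_nhds_unique (hlim 1) h1
  -- main induction
  have hF : ∀ L : List G, (∀ x ∈ L, x ∈ S) → |Φbar L.prod| ≤ 2 * C * L.length := by
    intro L
    induction L with
    | nil => intro _; simp [hbar1]
    | cons c L ih =>
      intro hmem
      have hc : c ∈ S := hmem c (by simp)
      have ih' := ih (fun x hx => hmem x (by simp [hx]))
      have h1 := hD L.prod c hc
      have e1 := abs_le.mp h1
      have e2 := abs_le.mp ih'
      rw [List.prod_cons, abs_le]
      simp only [List.length_cons]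
      push_cast
      constructor <;> linarith
  -- conclusion
  intro f
  have hf : f ∈ Submonoid.closure S := by
    have hf0 : f ∈ (Subgroup.closure S).toSubmonoid := by
      rw [hgen]; trivial
    rw [Subgroup.closure_toSubmonoid] at hf0
    have hsub : S ∪ S⁻¹ ⊆ S := by
      rintro x (hx | hx)
      · exact hx
      · simpa using hsymm x⁻¹ hx
    exact Submonoid.closure_mono hsub hf0
  obtain ⟨l, hl, hp⟩ := Submonoid.exists_list_of_mem_closure hf
  have hne : {n : ℕ | ∃ l : List G, l.length = n ∧ (∀ x ∈ l, x ∈ S) ∧ l.prod = f}.Nonempty :=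
    ⟨l.length, l, rfl, hl, hp⟩
  obtain ⟨l₀, hlen, hmem, hprod⟩ := Nat.sInf_mem hne
  have hlen' : l₀.length = wordNorm S f := hlen
  have := hF l₀ hmem
  rw [hprod, hlen'] at this
  have hnn : (0 : ℝ) ≤ (wordNorm S f : ℝ) := Nat.cast_nonneg _
  nlinarith
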